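/- Let x ∈ ℝ^n with |x| = 1, let m ≥ 0, and let f : ℝ → ℂ^N be continuously differentiable on [−1, 1] and satisfy the boundary conditions −i α_{n+1} Γ(x) f(1) = f(1) and −i α_{n+1} Γ(x) f(−1) = −f(−1). Then ∫_{−1}^{1} |−i Γ(x) f'(t) + m α_{n+1} f(t)|² dt = ∫_{−1}^{1} |f'(t)|² dt + m² ∫_{−1}^{1} |f(t)|² dt + m (|f(1)|² + |f(−1)|²), where |·| is the Euclidean norm on ℂ^N. -/

import Mathlib

open Matrix

lemma adjoint_dot {N : ℕ} (M P : Matrix (Fin N) (Fin N) ℂ) (a b : Fin N → ℂ) :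
    star (M *ᵥ a) ⬝ᵥ (P *ᵥ b) = star a ⬝ᵥ ((Mᴴ * P) *ᵥ b) := by
  rw [star_mulVec, ← mulVec_mulVec]; exact (dotProduct_mulVec (star a) Mᴴ (P *ᵥ b)).symm

lemma sum_normsq {N : ℕ} (u : Fin N → ℂ) : ∑ i, ‖u i‖ ^ 2 = (star u ⬝ᵥ u).re := by
  simp [dotProduct, Complex.re_sum, ← Complex.normSq_eq_norm_sq, Complex.normSq_apply,
    Complex.mul_re]

lemma dot_expand {N : ℕ} (Γ A : Matrix (Fin N) (Fin N) ℂ)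
    (hΓ : Γᴴ = Γ) (hA : Aᴴ = A) (hΓ2 : Γ * Γ = 1) (hA2 : A * A = 1)
    (hAC : Γ * A = -(A * Γ)) (m : ℝ) (u v : Fin N → ℂ) :
    star ((-Complex.I) • (Γ *ᵥ v) + (m:ℂ) • (A *ᵥ u)) ⬝ᵥ
        ((-Complex.I) • (Γ *ᵥ v) + (m:ℂ) • (A *ᵥ u))
      = star v ⬝ᵥ v + (m:ℂ)^2 * (star u ⬝ᵥ u)
        + (m:ℂ) * (star v ⬝ᵥ (((-Complex.I) • (A*Γ)) *ᵥ u)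
            + star u ⬝ᵥ (((-Complex.I) • (A*Γ)) *ᵥ v)) := by
  have hs : ∀ (c : ℂ) (w : Fin N → ℂ), star (c • w) = star c • star w := fun c w => star_smul c w
  simp only [star_add, hs, add_dotProduct, dotProduct_add, smul_dotProduct, dotProduct_smul,
    smul_eq_mul, adjoint_dot, hΓ, hA, hΓ2, hA2, smul_mulVec, one_mulVec, hAC,
    neg_mulVec, dotProduct_neg, star_neg, Complex.star_def, Complex.conj_I, Complex.conj_ofReal]
  ring_nf
  rw [Complex.I_sq]
  ring

lemma deriv_dot {N : ℕ} (B : Matrix (Fin N) (Fin N) ℂ) {s : Set ℝ} {t : ℝ}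
    {f f' : ℝ → Fin N → ℂ} (hu : HasDerivWithinAt f (f' t) s t) :
    HasDerivWithinAt (fun τ => star (f τ) ⬝ᵥ (B *ᵥ f τ))
      (star (f' t) ⬝ᵥ (B *ᵥ f t) + star (f t) ⬝ᵥ (B *ᵥ f' t)) s t := by
  have hi : ∀ i, HasDerivWithinAt (fun τ => f τ i) (f' t i) s t := hasDerivWithinAt_pi.1 hu
  have hBi : ∀ i, HasDerivWithinAt (fun τ => (B *ᵥ f τ) i) ((B *ᵥ f' t) i) s t := by
    intro i
    simp only [mulVec, dotProduct]
    exact HasDerivWithinAt.fun_sum fun k _ => (hi k).const_mul (B i k)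
  have h := HasDerivWithinAt.fun_sum (u := Finset.univ)
    (fun i (_ : i ∈ Finset.univ) => ((hi i).star.mul (hBi i)))
  simp only [dotProduct, Pi.star_apply]
  rw [← Finset.sum_add_distrib]
  exact h

lemma contOn_dot {N : ℕ} (B : Matrix (Fin N) (Fin N) ℂ) {s : Set ℝ}
    {u v : ℝ → Fin N → ℂ} (hu : ContinuousOn u s) (hv : ContinuousOn v s) :
    ContinuousOn (fun t => star (u t) ⬝ᵥ (B *ᵥ v t)) s := by
  simp only [dotProduct, mulVec, Pi.star_apply]
  apply continuousOn_finset_sum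
  intro i _
  exact (((continuous_apply i).comp_continuousOn hu).star).mul
    (continuousOn_finset_sum _ fun k _ =>
      (continuousOn_const).mul ((continuous_apply k).comp_continuousOn hv))

theorem transverse_dirac_square_identity (n N : ℕ)
    (α : Fin (n + 1) → Matrix (Fin N) (Fin N) ℂ)
    (hHerm : ∀ j, (α j).IsHermitian)
    (hAnti : ∀ j k, α j * α k + α k * α j = (if j = k then (2 : ℂ) else 0) • 1)
    (x : Fin n → ℝ) (hx : ∑ j, x j ^ 2 = 1)
    (m : ℝ) (hm : 0 ≤ m)
    (f f' : ℝ → Fin N → ℂ)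
    (hf : ∀ t ∈ Set.Icc (-1 : ℝ) 1, HasDerivWithinAt f (f' t) (Set.Icc (-1 : ℝ) 1) t)
    (hf' : ContinuousOn f' (Set.Icc (-1 : ℝ) 1))
    (hbc1 : ((-Complex.I) • (α (Fin.last n) *
        ∑ j : Fin n, (x j : ℂ) • α j.castSucc)).mulVec (f 1) = f 1)
    (hbc2 : ((-Complex.I) • (α (Fin.last n) *
        ∑ j : Fin n, (x j : ℂ) • α j.castSucc)).mulVec (f (-1)) = -f (-1)) :
    (∫ t in (-1 : ℝ)..1, ∑ i, ‖((-Complex.I) •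
          (∑ j : Fin n, (x j : ℂ) • α j.castSucc).mulVec (f' t)
        + (m : ℂ) • (α (Fin.last n)).mulVec (f t)) i‖ ^ 2)
      = (∫ t in (-1 : ℝ)..1, ∑ i, ‖f' t i‖ ^ 2)
        + m ^ 2 * (∫ t in (-1 : ℝ)..1, ∑ i, ‖f t i‖ ^ 2)
        + m * ((∑ i, ‖f 1 i‖ ^ 2) + ∑ i, ‖f (-1) i‖ ^ 2) := by
  set A := α (Fin.last n) with hAdef
  set Γ : Matrix (Fin N) (Fin N) ℂ := ∑ j : Fin n, (x j : ℂ) • α j.castSucc with hΓdef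
  have hA : Aᴴ = A := hHerm _
  have hΓH : Γᴴ = Γ := by
    simp only [hΓdef, conjTranspose_sum, conjTranspose_smul, Complex.star_def,
      Complex.conj_ofReal]
    exact Finset.sum_congr rfl fun j _ => by rw [(hHerm j.castSucc).eq]
  have hA2 : A * A = 1 := by
    have h := hAnti (Fin.last n) (Fin.last n)
    rw [if_pos rfl, ← two_smul ℂ (A * A)] at h
    exact smul_right_injective (Matrix (Fin N) (Fin N) ℂ) two_ne_zero h
  have hACsum : Γ * A + A * Γ = 0 := by
    rw [hΓdef, Finset.sum_mul, Finset.mul_sum, ← Finset.sum_add_distrib]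
    rw [Finset.sum_eq_zero]
    intro j _
    rw [smul_mul_assoc, mul_smul_comm, ← smul_add, hAnti,
      if_neg (Fin.castSucc_lt_last j).ne, zero_smul, smul_zero]
  have hAC : Γ * A = -(A * Γ) := eq_neg_of_add_eq_zero_left hACsum
  have hΓ2 : Γ * Γ = 1 := by
    have expand : Γ * Γ = ∑ j : Fin n, ∑ k : Fin n,
        ((x j * x k : ℝ) : ℂ) • (α j.castSucc * α k.castSucc) := by
      rw [hΓdef, Finset.sum_mul_sum]
      exact Finset.sum_congr rfl fun j _ => Finset.sum_congr rfl fun k _ => by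
        rw [smul_mul_assoc, mul_smul_comm, smul_smul, Complex.ofReal_mul]
    have h2 : Γ * Γ + Γ * Γ = (2:ℂ) • 1 := by
      nth_rewrite 2 [expand]
      rw [Finset.sum_comm]
      rw [expand, ← Finset.sum_add_distrib]
      have : ∀ j ∈ Finset.univ, (∑ k : Fin n,
            ((x j * x k : ℝ) : ℂ) • (α j.castSucc * α k.castSucc))
          + (∑ k : Fin n, ((x k * x j : ℝ) : ℂ) • (α k.castSucc * α j.castSucc))
          = ((2 * x j ^ 2 : ℝ) : ℂ) • 1 := by
        intro j _
        rw [← Finset.sum_add_distrib]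
        rw [Finset.sum_eq_single j]
        · rw [mul_comm (x j), ← smul_add, hAnti, if_pos (by rfl), smul_smul]
          norm_num
          ring_nf
        · intro k _ hk
          rw [mul_comm (x k), ← smul_add, hAnti,
            if_neg (fun h => hk (Fin.castSucc_injective n h).symm), zero_smul, smul_zero]
        · intro h; exact absurd (Finset.mem_univ j) h
      rw [Finset.sum_congr rfl this, ← Finset.sum_smul, ← Complex.ofReal_sum,
        ← Finset.mul_sum, hx]
      norm_num
    rw [← two_smul ℂ (Γ * Γ)] at h2
    exact smul_right_injective (Matrix (Fin N) (Fin N) ℂ) two_ne_zero h2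
  set B : Matrix (Fin N) (Fin N) ℂ := (-Complex.I) • (A * Γ) with hBdef
  set G' : ℝ → ℝ :=
    fun t => (star (f' t) ⬝ᵥ (B *ᵥ f t) + star (f t) ⬝ᵥ (B *ᵥ f' t)).re with hG'def
  set g : ℝ → ℝ := fun t => (star (f t) ⬝ᵥ (B *ᵥ f t)).re with hgdef
  have hre : ∀ (r : ℝ) (z : ℂ), ((r:ℂ) * z).re = r * z.re := fun r z => by
    simp [Complex.mul_re]
  -- pointwise identity
  have hpt : ∀ t : ℝ,
      (∑ i, ‖((-Complex.I) • (Γ.mulVec (f' t)) + (m:ℂ) • (A.mulVec (f t))) i‖ ^ 2)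
        = (∑ i, ‖f' t i‖ ^ 2) + m ^ 2 * (∑ i, ‖f t i‖ ^ 2) + m * G' t := by
    intro t
    rw [sum_normsq, dot_expand Γ A hΓH hA hΓ2 hA2 hAC m (f t) (f' t)]
    rw [sum_normsq (f' t), sum_normsq (f t)]
    have : ((m:ℂ))^2 = ((m^2 : ℝ) : ℂ) := by push_cast; ring
    rw [this]
    simp only [Complex.add_re, hre, hG'def, hBdef]
  have hIcc : Set.uIcc (-1 : ℝ) 1 = Set.Icc (-1 : ℝ) 1 := Set.uIcc_of_le (by norm_num)
  have hfc : ContinuousOn f (Set.Icc (-1 : ℝ) 1) := fun t ht => (hf t ht).continuousWithinAt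
  have hGc : ContinuousOn G' (Set.Icc (-1 : ℝ) 1) :=
    Complex.continuous_re.comp_continuousOn ((contOn_dot B hf' hfc).add (contOn_dot B hfc hf'))
  have hPc : ContinuousOn (fun t => ∑ i, ‖f' t i‖ ^ 2) (Set.Icc (-1 : ℝ) 1) :=
    continuousOn_finset_sum _ fun i _ =>
      (((continuous_apply i).comp_continuousOn hf').norm).pow 2
  have hQc : ContinuousOn (fun t => ∑ i, ‖f t i‖ ^ 2) (Set.Icc (-1 : ℝ) 1) :=
    continuousOn_finset_sum _ fun i _ =>
      (((continuous_apply i).comp_continuousOn hfc).norm).pow 2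
  have hPint : IntervalIntegrable (fun t => ∑ i, ‖f' t i‖ ^ 2)
      MeasureTheory.volume (-1 : ℝ) 1 := (hIcc ▸ hPc).intervalIntegrable
  have hQint : IntervalIntegrable (fun t => m ^ 2 * ∑ i, ‖f t i‖ ^ 2)
      MeasureTheory.volume (-1 : ℝ) 1 := ((hIcc ▸ hQc).intervalIntegrable).const_mul _
  have hGint : IntervalIntegrable G' MeasureTheory.volume (-1 : ℝ) 1 :=
    (hIcc ▸ hGc).intervalIntegrable
  have hmGint : IntervalIntegrable (fun t => m * G' t) MeasureTheory.volume (-1 : ℝ) 1 :=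
    hGint.const_mul _
  -- FTC
  have hgc : ContinuousOn g (Set.Icc (-1 : ℝ) 1) :=
    Complex.continuous_re.comp_continuousOn (contOn_dot B hfc hfc)
  have hgderiv : ∀ t ∈ Set.Icc (-1 : ℝ) 1,
      HasDerivWithinAt g (G' t) (Set.Icc (-1 : ℝ) 1) t := by
    intro t ht
    exact (Complex.reCLM.hasFDerivAt).comp_hasDerivWithinAt t (deriv_dot B (hf t ht))
  have hftc : ∫ t in (-1 : ℝ)..1, G' t = g 1 - g (-1) := by
    apply intervalIntegral.integral_eq_sub_of_hasDeriv_right_of_le (by norm_num) hgc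
    · intro t ht
      exact ((hgderiv t (Set.Ioo_subset_Icc_self ht)).hasDerivAt
        (Icc_mem_nhds ht.1 ht.2)).hasDerivWithinAt
    · exact hGint
  have hg1 : g 1 = ∑ i, ‖f 1 i‖ ^ 2 := by
    rw [hgdef]
    simp only
    rw [show B *ᵥ f 1 = f 1 from hbc1, ← sum_normsq]
  have hgm1 : g (-1) = -∑ i, ‖f (-1) i‖ ^ 2 := by
    rw [hgdef]
    simp only
    rw [show B *ᵥ f (-1) = -f (-1) from hbc2, dotProduct_neg, Complex.neg_re, ← sum_normsq]
  simp only [hpt]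
  rw [intervalIntegral.integral_add (hPint.add hQint) hmGint,
    intervalIntegral.integral_add hPint hQint,
    intervalIntegral.integral_const_mul, intervalIntegral.integral_const_mul,
    hftc, hg1, hgm1]
  ring
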